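/- arXiv:1307.6431 — 9 statements merged into one kernel-verified Lean document; each statement's English description precedes it below -/
import Mathlib

section
/- Let Γ be totally ordered, (Y,d,Γ_Y) a subspace of the complete ultrametric space (X,d,Γ) with Γ_Y• coinitial in Γ•, d(Y×Y) = Γ_Y, d(X×X) = Γ. Then there exists a complete subspace S of X in which Y is dense (a completion of Y in X). -/
/-- A subspace S of X is complete: every chain of balls of S whose radii have
infimum 0 has nonempty intersection. -/
def IsCompleteSubspace {X Γ : Type*} [LinearOrder Γ] [OrderBot Γ]
    (d : X → X → Γ) (S : Set X) : Prop :=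
  ∀ (I : Type) (a : I → X) (γ : I → Γ),
    (∀ i, a i ∈ S) → (∀ i, γ i ≠ ⊥) →
    IsChain (· ⊆ ·) (Set.range fun i => {w ∈ S | d (a i) w ≤ γ i}) →
    (∀ ε : Γ, ε ≠ ⊥ → ∃ i, γ i < ε) →
    (⋂ i, {w ∈ S | d (a i) w ≤ γ i}).Nonempty

/-- Y is dense in the subspace S. -/
def IsDenseIn {X Γ : Type*} [LinearOrder Γ] [OrderBot Γ]
    (d : X → X → Γ) (Y S : Set X) : Prop :=
  Y ⊆ S ∧ ∀ x ∈ S, ∀ γ : Γ, γ ≠ ⊥ → ∃ y ∈ Y, d x y < γ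

/-- Existence of a completion of Y inside the complete space X: there is a
complete subspace S of X in which Y is dense. -/
theorem stmt_10 {X Γ : Type*} [LinearOrder Γ] [OrderBot Γ]
    (d : X → X → Γ)
    (hd1 : ∀ x y : X, d x y = ⊥ ↔ x = y)
    (hd2 : ∀ x y : X, d x y = d y x)
    (hd3 : ∀ x y z : X, d x z ≤ max (d x y) (d y z))
    (hX : IsCompleteSubspace d (Set.univ : Set X))
    (Y : Set X) (hY : Y.Nonempty)
    (hcoin : ∀ γ : Γ, γ ≠ ⊥ → ∃ y ∈ Y, ∃ y' ∈ Y, d y y' ≠ ⊥ ∧ d y y' ≤ γ) :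
    ∃ S : Set X, IsCompleteSubspace d S ∧ IsDenseIn d Y S := by
  set S : Set X := {x | ∀ γ : Γ, γ ≠ ⊥ → ∃ y ∈ Y, d x y < γ} with hS
  have hYS : Y ⊆ S := by
    intro y hy γ hγ
    exact ⟨y, hy, by simpa [(hd1 y y).mpr rfl] using lt_of_le_of_ne bot_le (Ne.symm hγ)⟩
  refine ⟨S, ?_, hYS, fun x hx γ hγ => hx γ hγ⟩
  intro I a γ haS hγ hchain hcof
  -- key: the corresponding balls in X also form a chain
  have hdij : ∀ i j : I, γ i ≤ γ j → d (a j) (a i) ≤ γ j := by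
    intro i j hij
    by_cases he : ({w ∈ S | d (a i) w ≤ γ i} : Set X) = {w ∈ S | d (a j) w ≤ γ j}
    · have : a i ∈ ({w ∈ S | d (a i) w ≤ γ i} : Set X) :=
        ⟨haS i, by simp [(hd1 (a i) (a i)).mpr rfl]⟩
      rw [he] at this
      exact this.2
    · rcases hchain ⟨i, rfl⟩ ⟨j, rfl⟩ he with h | h
      · have : a i ∈ ({w ∈ S | d (a j) w ≤ γ j} : Set X) :=
          h ⟨haS i, by simp [(hd1 (a i) (a i)).mpr rfl]⟩
        exact this.2
      · have : a j ∈ ({w ∈ S | d (a i) w ≤ γ i} : Set X) :=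
          h ⟨haS j, by simp [(hd1 (a j) (a j)).mpr rfl]⟩
        calc d (a j) (a i) = d (a i) (a j) := hd2 _ _
          _ ≤ γ i := this.2
          _ ≤ γ j := hij
  have hchainX : IsChain (· ⊆ ·)
      (Set.range fun i => {w ∈ (Set.univ : Set X) | d (a i) w ≤ γ i}) := by
    rintro _ ⟨i, rfl⟩ _ ⟨j, rfl⟩ _
    rcases le_total (γ i) (γ j) with hij | hij
    · left
      intro w hw
      exact ⟨trivial, le_trans (hd3 (a j) (a i) w)
        (max_le (hdij i j hij) (le_trans hw.2 hij))⟩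
    · right
      intro w hw
      exact ⟨trivial, le_trans (hd3 (a i) (a j) w)
        (max_le (hdij j i hij) (le_trans hw.2 hij))⟩
  obtain ⟨w, hw⟩ := hX I a γ (fun _ => trivial) hγ hchainX hcof
  simp only [Set.mem_iInter, Set.mem_setOf_eq, Set.mem_sep_iff] at hw
  have hwS : w ∈ S := by
    intro ε hε
    obtain ⟨i, hi⟩ := hcof ε hε
    obtain ⟨y, hy, hdy⟩ := haS i (γ i) (hγ i)
    refine ⟨y, hy, lt_of_le_of_lt ?_ hi⟩
    calc d w y ≤ max (d w (a i)) (d (a i) y) := hd3 _ _ _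
      _ ≤ γ i := max_le (by rw [hd2]; exact (hw i).2) hdy.le
  exact ⟨w, Set.mem_iInter.2 fun i => ⟨hwS, (hw i).2⟩⟩
end

section
/- Let X be a principally complete ultrametric space and φ: X → X strictly contracting. Then φ has exactly one fixed point. -/
/-- Fixed Point Theorem: a strictly contracting self-map of a principally
complete ultrametric space has exactly one fixed point. -/
theorem stmt_12 {X Γ : Type*} [PartialOrder Γ] [OrderBot Γ]
    (d : X → X → Γ)
    (hd1 : ∀ x y : X, d x y = ⊥ ↔ x = y)
    (hd2 : ∀ x y : X, d x y = d y x)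
    (hd3 : ∀ (γ : Γ) (x y z : X), d x y ≤ γ → d y z ≤ γ → d x z ≤ γ)
    (hpc : ∀ C : Set (Set X),
      (∀ B ∈ C, ∃ x y : X, x ≠ y ∧ B = {w : X | d x w ≤ d x y}) →
      IsChain (· ⊆ ·) C → (⋂₀ C).Nonempty)
    (φ : X → X)
    (hφ : ∀ x x' : X, x ≠ x' → d (φ x) (φ x') < d x x') :
    ∃! z : X, φ z = z := by
  -- Key lemma: if `d x z ≤ d x (φ x)` then the ball of `z` is inside the ball of `x`.
  have key : ∀ x z : X, d x z ≤ d x (φ x) →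
      d z (φ z) ≤ d x (φ x) ∧
        {w : X | d z w ≤ d z (φ z)} ⊆ {w : X | d x w ≤ d x (φ x)} := by
    intro x z hz
    have hzphi : d z (φ z) ≤ d x (φ x) := by
      rcases eq_or_ne z x with rfl | hne
      · exact le_refl _
      · have h1 : d (φ x) (φ z) < d x z := hφ x z (Ne.symm hne)
        have h2 : d x (φ z) ≤ d x (φ x) :=
          hd3 _ _ _ _ (le_refl _) (le_of_lt (lt_of_lt_of_le h1 hz))
        have h3 : d z x ≤ d x (φ x) := by rw [hd2]; exact hz
        exact hd3 _ _ _ _ h3 h2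
    refine ⟨hzphi, fun w hw => ?_⟩
    exact hd3 _ _ _ _ hz (le_trans hw hzphi)
  have hex : ∃ z : X, φ z = z := by
    by_contra hno
    push_neg at hno
    set S : Set (Set X) :=
      {B | ∃ x : X, B = {w : X | d x w ≤ d x (φ x)}} with hS
    have hball : ∀ B ∈ S, ∃ x y : X, x ≠ y ∧ B = {w : X | d x w ≤ d x y} := by
      rintro B ⟨x, rfl⟩
      exact ⟨x, φ x, fun h => hno x h.symm, rfl⟩
    -- Every chain in S has a lower bound in S
    have hchain : ∀ c ⊆ S, IsChain (· ⊆ ·) c → ∃ lb ∈ S, ∀ s ∈ c, lb ⊆ s := by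
      intro c hcS hc
      obtain ⟨z, hz⟩ := hpc c (fun B hB => hball B (hcS hB)) hc
      refine ⟨{w : X | d z w ≤ d z (φ z)}, ⟨z, rfl⟩, ?_⟩
      intro s hs
      obtain ⟨x, rfl⟩ := hcS hs
      exact (key x z (hz _ hs)).2
    obtain ⟨B, hBmin⟩ := zorn_superset S hchain
    obtain ⟨x, rfl⟩ := hBmin.prop
    -- the ball of φ x is strictly smaller, contradiction
    have hsub : {w : X | d (φ x) w ≤ d (φ x) (φ (φ x))} ⊆
        {w : X | d x w ≤ d x (φ x)} :=
      (key x (φ x) (le_refl _)).2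
    have heq := hBmin.eq_of_subset ⟨φ x, rfl⟩ hsub
    have hxmem : x ∈ {w : X | d x w ≤ d x (φ x)} := by
      simp only [Set.mem_setOf_eq]
      rw [(hd1 x x).mpr rfl]
      exact bot_le
    rw [← heq] at hxmem
    have hx1 : d (φ x) x ≤ d (φ x) (φ (φ x)) := hxmem
    have hx2 : d (φ x) (φ (φ x)) < d x (φ x) := hφ x (φ x) (fun h => hno x h.symm)
    rw [hd2 x (φ x)] at hx2
    exact absurd (lt_of_le_of_lt hx1 hx2) (lt_irrefl _)
  obtain ⟨z, hz⟩ := hex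
  refine ⟨z, hz, fun y hy => ?_⟩
  by_contra hne
  have := hφ y z hne
  rw [hy, hz] at this
  exact absurd this (lt_irrefl _)
end

section
/- Let X be a principally complete ultrametric space (with Γ• having no least element and X having at least two points), φ: X → X strictly contracting with fixed point z, and y ∈ X, y ≠ z. Then either there exists a family α ∈ P with a₀ = y that reaches z, or there exists an asymptotic approximation α ∈ P to z with a₀ = y. -/
/-- Membership in the set 𝒫 of families: α = (a_ι)_{ι<λ} with
(i) a_{ι+1} = φ(a_ι) ≠ a_ι whenever ι+1 < λ;
(ii) (d(a_ι, a_{ι+1}))_{ι+1<λ} strictly decreasing;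
(iii) for limit μ < λ, d(a_μ, a_ι) ≤ d(a_ι, a_{ι+1}) for all ι < μ. -/
def MemP {X Γ : Type*} [PartialOrder Γ] [OrderBot Γ]
    (d : X → X → Γ) (φ : X → X) (lam : Ordinal) (a : Ordinal → X) : Prop :=
  (∀ ι : Ordinal, ι + 1 < lam → a (ι + 1) = φ (a ι) ∧ φ (a ι) ≠ a ι) ∧
  (∀ ι κ : Ordinal, ι < κ → κ + 1 < lam →
    d (a κ) (a (κ + 1)) < d (a ι) (a (ι + 1))) ∧
  (∀ μ : Ordinal, Order.IsSuccLimit μ → μ < lam →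
    ∀ ι : Ordinal, ι < μ → d (a μ) (a ι) ≤ d (a ι) (a (ι + 1)))

section KeyLemma

variable {X Γ : Type*} [PartialOrder Γ] [OrderBot Γ]

omit [OrderBot Γ] in
/-- If `w ≠ z` then `w` is not a fixed point of `φ`. -/
lemma aux_ne_fix (d : X → X → Γ) (φ : X → X)
    (hφ : ∀ x x' : X, x ≠ x' → d (φ x) (φ x') < d x x')
    (z : X) (hz : φ z = z) {w : X} (hw : w ≠ z) : φ w ≠ w := by
  intro h
  have := hφ w z hw
  rw [h, hz] at this
  exact lt_irrefl _ this

/-- Key lemma: the fixed point `z` lies in every ball `B(x, d(x, φ x))`. -/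
lemma key_lemma (d : X → X → Γ)
    (hd1 : ∀ x y : X, d x y = ⊥ ↔ x = y)
    (hd2 : ∀ x y : X, d x y = d y x)
    (hd3 : ∀ (γ : Γ) (x y z : X), d x y ≤ γ → d y z ≤ γ → d x z ≤ γ)
    (hpc : ∀ C : Set (Set X),
      (∀ B ∈ C, ∃ x y : X, x ≠ y ∧ B = {w : X | d x w ≤ d x y}) →
      IsChain (· ⊆ ·) C → (⋂₀ C).Nonempty)
    (φ : X → X)
    (hφ : ∀ x x' : X, x ≠ x' → d (φ x) (φ x') < d x x')
    (z : X) (hz : φ z = z) :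
    ∀ x : X, d x z ≤ d x (φ x) := by
  classical
  intro x
  by_cases hx : x = z
  · rw [hx, (hd1 z z).mpr rfl]
    exact bot_le
  -- Notation: the ball centered at w with radius d(w, φ w)
  set Ball : X → Set X := fun w => {t | d w t ≤ d w (φ w)} with hBall
  have hmem_self : ∀ w, w ∈ Ball w := by
    intro w
    show d w w ≤ d w (φ w)
    rw [(hd1 w w).mpr rfl]; exact bot_le
  have hmem_phi : ∀ w, φ w ∈ Ball w := fun w => le_refl _
  -- radius monotonicity
  have hrad : ∀ w w', w' ∈ Ball w → d w' (φ w') ≤ d w (φ w) := by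
    intro w w' hw'
    by_cases hww : w' = w
    · subst hww; exact le_refl _
    have h1 : d w w' ≤ d w (φ w) := hw'
    have h2 : d w' (φ w) ≤ d w (φ w) := by
      refine hd3 _ w' w (φ w) ?_ (le_refl _)
      rw [hd2]; exact h1
    have h3 : d (φ w) (φ w') ≤ d w (φ w) :=
      le_of_lt (lt_of_lt_of_le (hφ w w' (fun h => hww h.symm)) h1)
    exact hd3 _ w' (φ w) (φ w') h2 h3
  -- nestedness
  have hnest : ∀ w w', w' ∈ Ball w → Ball w' ⊆ Ball w := by
    intro w w' hw' t ht
    have ht' : d w' t ≤ d w (φ w) := le_trans ht (hrad w w' hw')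
    exact hd3 _ w w' t hw' ht'
  have hz_ball : Ball z = {z} := by
    ext t
    simp only [hBall, Set.mem_setOf_eq, Set.mem_singleton_iff, hz]
    rw [(hd1 z z).mpr rfl]
    constructor
    · intro h
      exact ((hd1 z t).mp (le_bot_iff.mp h)).symm
    · rintro rfl
      rw [(hd1 t t).mpr rfl]
  -- the collection for Zorn
  set S : Set (Set X) := {B | (∃ w, B = Ball w) ∧ B ⊆ Ball x} with hS
  have hxS : Ball x ∈ S := ⟨⟨x, rfl⟩, subset_rfl⟩
  have hchains : ∀ c ⊆ S, IsChain (· ⊆ ·) c → ∃ lb ∈ S, ∀ s ∈ c, lb ⊆ s := by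
    intro c hcS hchain
    by_cases hall : ∀ B ∈ c, ∃ w, w ≠ z ∧ B = Ball w
    · rcases Set.eq_empty_or_nonempty c with rfl | ⟨B₀, hB₀⟩
      · exact ⟨Ball x, hxS, by simp⟩
      · have hpres : ∀ B ∈ c, ∃ x y : X, x ≠ y ∧ B = {w : X | d x w ≤ d x y} := by
          intro B hB
          obtain ⟨w, hwz, rfl⟩ := hall B hB
          exact ⟨w, φ w, (aux_ne_fix d φ hφ z hz hwz).symm, rfl⟩
        obtain ⟨w', hw'⟩ := hpc c hpres hchain
        have hsub : ∀ B ∈ c, Ball w' ⊆ B := by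
          intro B hB
          obtain ⟨w, hwz, rfl⟩ := hall B hB
          exact hnest _ _ (hw' _ hB)
        refine ⟨Ball w', ⟨⟨w', rfl⟩, ?_⟩, hsub⟩
        exact subset_trans (hsub B₀ hB₀) (hcS hB₀).2
    · push_neg at hall
      obtain ⟨B₀, hB₀c, hB₀⟩ := hall
      obtain ⟨⟨w₀, rfl⟩, hsubx⟩ := hcS hB₀c
      have hw₀ : w₀ = z := by
        by_contra h
        exact (hB₀ w₀ h) rfl
      subst hw₀
      refine ⟨Ball w₀, hcS hB₀c, ?_⟩
      intro B hB
      by_cases hBB : B = Ball w₀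
      · rw [hBB]
      · rcases hchain hB hB₀c hBB with h | h
        · obtain ⟨⟨w, rfl⟩, -⟩ := hcS hB
          have hmem : w ∈ Ball w₀ := h (hmem_self w)
          rw [hz_ball] at hmem
          rw [Set.mem_singleton_iff] at hmem
          subst hmem
          exact subset_rfl
        · exact h
  obtain ⟨m, hm⟩ := zorn_superset S hchains
  · obtain ⟨⟨w₀, rfl⟩, hsubx⟩ := hm.1
    by_cases hw₀ : w₀ = z
    · exact hsubx (by rw [hw₀, hz_ball]; exact rfl)
    · exfalso
      have hB' : Ball (φ w₀) ∈ S :=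
        ⟨⟨φ w₀, rfl⟩, subset_trans (hnest _ _ (hmem_phi w₀)) hsubx⟩
      have heq : Ball w₀ ⊆ Ball (φ w₀) :=
        hm.2 hB' (hnest _ _ (hmem_phi w₀))
      have hw₀mem : w₀ ∈ Ball (φ w₀) := heq (hmem_self w₀)
      have h1 : d (φ w₀) w₀ ≤ d (φ w₀) (φ (φ w₀)) := hw₀mem
      have h2 : d (φ w₀) (φ (φ w₀)) < d w₀ (φ w₀) :=
        hφ w₀ (φ w₀) (fun h => aux_ne_fix d φ hφ z hz hw₀ h.symm)
      rw [hd2 (φ w₀) w₀] at h1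
      exact lt_irrefl _ (lt_of_le_of_lt h1 h2)

end KeyLemma

section Family

variable {X Γ : Type*} [PartialOrder Γ] [OrderBot Γ]

/-- The canonical family: iterates of `φ` on `y` at finite stages, `z` beyond. -/
noncomputable def famA (φ : X → X) (y z : X) : Ordinal → X :=
  fun ι => if h : ι < Ordinal.omega0 then
    φ^[Classical.choose (Ordinal.lt_omega0.mp h)] y else z

lemma famA_nat (φ : X → X) (y z : X) (m : ℕ) :
    famA φ y z (m : Ordinal) = φ^[m] y := by
  have hm : (m : Ordinal) < Ordinal.omega0 := Ordinal.nat_lt_omega0 m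
  rw [famA, dif_pos hm]
  have hspec := Classical.choose_spec (Ordinal.lt_omega0.mp hm)
  have : Classical.choose (Ordinal.lt_omega0.mp hm) = m := by exact_mod_cast hspec.symm
  rw [this]

lemma famA_infty (φ : X → X) (y z : X) {ι : Ordinal} (h : Ordinal.omega0 ≤ ι) :
    famA φ y z ι = z := by
  rw [famA, dif_neg (not_lt.mpr h)]

end Family

/-- Corollary to the Approximation Theorem: starting from any y ≠ z, either some
family in 𝒫 beginning at y reaches the fixed point z, or some family in 𝒫
beginning at y is an asymptotic approximation to z. -/
theorem stmt_13 {X Γ : Type*} [PartialOrder Γ] [OrderBot Γ]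
    (d : X → X → Γ)
    (hd1 : ∀ x y : X, d x y = ⊥ ↔ x = y)
    (hd2 : ∀ x y : X, d x y = d y x)
    (hd3 : ∀ (γ : Γ) (x y z : X), d x y ≤ γ → d y z ≤ γ → d x z ≤ γ)
    (hns : ∀ γ : Γ, γ ≠ ⊥ → ∃ γ' : Γ, γ' ≠ ⊥ ∧ γ' < γ)
    (htwo : ∃ x y : X, x ≠ y)
    (hpc : ∀ C : Set (Set X),
      (∀ B ∈ C, ∃ x y : X, x ≠ y ∧ B = {w : X | d x w ≤ d x y}) →
      IsChain (· ⊆ ·) C → (⋂₀ C).Nonempty)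
    (φ : X → X)
    (hφ : ∀ x x' : X, x ≠ x' → d (φ x) (φ x') < d x x')
    (z : X) (hz : φ z = z)
    (y : X) (hy : y ≠ z) :
    (∃ (lam : Ordinal) (a : Ordinal → X), MemP d φ lam a ∧ a 0 = y ∧
      ∃ ι < lam, a ι = z) ∨
    (∃ (lam : Ordinal) (a : Ordinal → X), MemP d φ lam a ∧ a 0 = y ∧
      Order.IsSuccLimit lam ∧
      (⋂ ι ∈ Set.Iio lam, {w : X | d (a ι) w ≤ d (a ι) (φ (a ι))}) = {z}) := by
  classical
  left
  set a : Ordinal → X := famA φ y z with ha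
  have ha0 : a 0 = y := by
    have : ((0 : ℕ) : Ordinal) = (0 : Ordinal) := by norm_num
    rw [ha, ← this, famA_nat]
    simp
  -- strict decrease of successive distances, as long as z not yet reached
  have hstep : ∀ m : ℕ, φ^[m] y ≠ z →
      d (φ^[m+1] y) (φ^[m+2] y) < d (φ^[m] y) (φ^[m+1] y) := by
    intro m hm
    have h1 : φ^[m+1] y = φ (φ^[m] y) := Function.iterate_succ_apply' φ m y
    have h2 : φ^[m+2] y = φ (φ^[m+1] y) := Function.iterate_succ_apply' φ (m+1) y
    rw [h1, h2, h1]
    exact hφ _ _ (fun h => aux_ne_fix d φ hφ z hz hm ((h1 ▸ h : φ^[m] y = φ (φ^[m] y))).symm)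
  have hdec : ∀ j : ℕ, (∀ k, k < j → φ^[k] y ≠ z) → ∀ i : ℕ, i < j →
      d (φ^[j] y) (φ^[j+1] y) < d (φ^[i] y) (φ^[i+1] y) := by
    intro j
    induction j with
    | zero => intro _ i hi; omega
    | succ j ih =>
        intro hk i hi
        have hj : φ^[j] y ≠ z := hk j (Nat.lt_succ_self j)
        rcases Nat.lt_succ_iff_lt_or_eq.mp hi with h | h
        · exact lt_trans (hstep j hj) (ih (fun k hk' => hk k (Nat.lt_succ_of_lt hk')) i h)
        · subst h; exact hstep i hj
  -- cast helpers
  have hcast1 : ∀ m : ℕ, ((m : Ordinal) + 1) = ((m + 1 : ℕ) : Ordinal) := by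
    intro m; norm_cast
  have hanat : ∀ m : ℕ, a ((m : Ordinal)) = φ^[m] y := fun m => famA_nat φ y z m
  have haω : a Ordinal.omega0 = z := famA_infty φ y z (le_refl _)
  have hanat1 : ∀ m : ℕ, a ((m : Ordinal) + 1) = φ^[m+1] y := by
    intro m; rw [hcast1 m, hanat (m+1)]
  by_cases hfin : ∃ n : ℕ, φ^[n] y = z
  · -- reached after finitely many steps
    set n := Nat.find hfin with hn
    have hnz : φ^[n] y = z := Nat.find_spec hfin
    have hlt : ∀ m, m < n → φ^[m] y ≠ z := fun m hm => Nat.find_min hfin hm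
    refine ⟨(n : Ordinal) + 1, a, ⟨?_, ?_, ?_⟩, ha0, ⟨(n : Ordinal), ?_, ?_⟩⟩
    · -- condition (i)
      intro ι hι
      rw [Ordinal.add_one_eq_succ, Ordinal.add_one_eq_succ, Order.succ_lt_succ_iff] at hι
      obtain ⟨m, rfl⟩ := Ordinal.lt_omega0.mp (lt_of_lt_of_le hι (Ordinal.nat_lt_omega0 n).le)
      have hmn : m < n := by exact_mod_cast hι
      constructor
      · rw [hanat1 m, hanat m]
        exact Function.iterate_succ_apply' φ m y
      · rw [hanat m]
        exact aux_ne_fix d φ hφ z hz (hlt m hmn)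
    · -- condition (ii)
      intro ι κ hik hκ
      rw [Ordinal.add_one_eq_succ, Ordinal.add_one_eq_succ, Order.succ_lt_succ_iff] at hκ
      obtain ⟨j, rfl⟩ := Ordinal.lt_omega0.mp (lt_of_lt_of_le hκ (Ordinal.nat_lt_omega0 n).le)
      obtain ⟨i, rfl⟩ := Ordinal.lt_omega0.mp (lt_trans hik (Ordinal.nat_lt_omega0 j))
      have hjn : j < n := by exact_mod_cast hκ
      have hij : i < j := by exact_mod_cast hik
      rw [hanat i, hanat j, hanat1 i, hanat1 j]
      exact hdec j (fun k hk => hlt k (lt_trans hk hjn)) i hij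
    · -- condition (iii): no limit ordinals below n+1
      intro μ hμ hμlt
      exfalso
      have h1 : Ordinal.omega0 ≤ μ := Ordinal.omega0_le_of_isSuccLimit hμ
      have h2 : ((n : Ordinal) + 1) < Ordinal.omega0 := by
        rw [hcast1 n]; exact Ordinal.nat_lt_omega0 (n+1)
      exact absurd (lt_trans hμlt h2) (not_lt.mpr h1)
    · rw [Ordinal.add_one_eq_succ]; exact Order.lt_succ _
    · rw [hanat n]; exact hnz
  · -- never reached finitely: reach z at stage ω
    push_neg at hfin
    have hkey : ∀ x : X, d x z ≤ d x (φ x) := key_lemma d hd1 hd2 hd3 hpc φ hφ z hz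
    refine ⟨Ordinal.omega0 + 1, a, ⟨?_, ?_, ?_⟩, ha0, ⟨Ordinal.omega0, ?_, ?_⟩⟩
    · -- condition (i)
      intro ι hι
      rw [Ordinal.add_one_eq_succ, Ordinal.add_one_eq_succ, Order.succ_lt_succ_iff] at hι
      obtain ⟨m, rfl⟩ := Ordinal.lt_omega0.mp hι
      constructor
      · rw [hanat1 m, hanat m]
        exact Function.iterate_succ_apply' φ m y
      · rw [hanat m]
        exact aux_ne_fix d φ hφ z hz (hfin m)
    · -- condition (ii)
      intro ι κ hik hκ
      rw [Ordinal.add_one_eq_succ, Ordinal.add_one_eq_succ, Order.succ_lt_succ_iff] at hκ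
      obtain ⟨j, rfl⟩ := Ordinal.lt_omega0.mp hκ
      obtain ⟨i, rfl⟩ := Ordinal.lt_omega0.mp (lt_trans hik (Ordinal.nat_lt_omega0 j))
      have hij : i < j := by exact_mod_cast hik
      rw [hanat i, hanat j, hanat1 i, hanat1 j]
      exact hdec j (fun k _ => hfin k) i hij
    · -- condition (iii): only limit is ω itself
      intro μ hμ hμlt ι hι
      have h1 : Ordinal.omega0 ≤ μ := Ordinal.omega0_le_of_isSuccLimit hμ
      have h2 : μ ≤ Ordinal.omega0 := by
        rw [Ordinal.add_one_eq_succ, Order.lt_succ_iff] at hμlt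
        exact hμlt
      have hμω : μ = Ordinal.omega0 := le_antisymm h2 h1
      subst hμω
      obtain ⟨m, rfl⟩ := Ordinal.lt_omega0.mp hι
      rw [haω, hanat m, hanat1 m]
      have h3 : φ^[m+1] y = φ (φ^[m] y) := Function.iterate_succ_apply' φ m y
      rw [h3, hd2]
      exact hkey (φ^[m] y)
    · rw [Ordinal.add_one_eq_succ]; exact Order.lt_succ _
    · exact haω
end

section
/- Let X be principally complete, φ strictly contracting with fixed point z, λ a limit ordinal, and α = (a_ι)_{ι<λ} ∈ P. If t ∈ ∩_{ι<λ} B_ι(α) then d(t, φ(t)) ≤ d(a_ι, a_{ι+1}) for every ι < λ, and the extended family α' = (a'_ι)_{ι<λ+1} with a'_ι = a_ι for ι < λ and a'_λ = t belongs to P (provided t ≠ φ(t) in case one extends further). -/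
/-- If t lies in the intersection of the balls B_ι(α) of a family α ∈ 𝒫 of limit
length λ, then d(t, φ(t)) ≤ d(a_ι, a_{ι+1}) for every ι < λ, and the extended
family α' of length λ+1 obtained by appending t belongs to 𝒫. -/
theorem stmt_14 {X Γ : Type*} [PartialOrder Γ] [OrderBot Γ]
    (d : X → X → Γ)
    (hd1 : ∀ x y : X, d x y = ⊥ ↔ x = y)
    (hd2 : ∀ x y : X, d x y = d y x)
    (hd3 : ∀ (γ : Γ) (x y z : X), d x y ≤ γ → d y z ≤ γ → d x z ≤ γ)
    (φ : X → X)
    (hφ : ∀ x x' : X, x ≠ x' → d (φ x) (φ x') < d x x')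
    (lam : Ordinal) (hlam : Order.IsSuccLimit lam) (a : Ordinal → X)
    (hP : MemP d φ lam a)
    (t : X) (ht : ∀ ι : Ordinal, ι < lam → d (a ι) t ≤ d (a ι) (φ (a ι))) :
    (∀ ι : Ordinal, ι < lam → d t (φ t) ≤ d (a ι) (a (ι + 1))) ∧
    MemP d φ (lam + 1) (fun ι => if ι < lam then a ι else t) := by
  have hsucc : ∀ ι : Ordinal, ι < lam → ι + 1 < lam := fun ι hι => by have := hlam.succ_lt hι; rwa [Ordinal.add_one_eq_succ]
  have key : ∀ ι : Ordinal, ι < lam → d t (φ t) ≤ d (a ι) (a (ι + 1)) := by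
    intro ι hι
    have heq : a (ι + 1) = φ (a ι) := (hP.1 ι (hsucc ι hι)).1
    have hD : d (a ι) t ≤ d (a ι) (a (ι + 1)) := by rw [heq]; exact ht ι hι
    have h1 : d t (φ (a ι)) ≤ d (a ι) (a (ι + 1)) := by
      refine hd3 _ t (a ι) (φ (a ι)) (by rw [hd2]; exact hD) (by rw [heq])
    have h2 : d (φ (a ι)) (φ t) ≤ d (a ι) (a (ι + 1)) := by
      by_cases h : a ι = t
      · have : d (φ (a ι)) (φ t) = ⊥ := (hd1 _ _).mpr (by rw [h])
        rw [this]; exact bot_le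
      · exact le_of_lt (lt_of_lt_of_le (hφ _ _ h) hD)
    exact hd3 _ t (φ (a ι)) (φ t) h1 h2
  have hlt1 : ∀ κ : Ordinal, κ + 1 < lam + 1 ↔ κ < lam := by
    intro κ
    rw [Ordinal.add_one_eq_succ, Ordinal.add_one_eq_succ, Order.succ_lt_succ_iff]
  have hle : ∀ μ : Ordinal, μ < lam + 1 ↔ μ ≤ lam := by
    intro μ; rw [Ordinal.add_one_eq_succ, Order.lt_succ_iff]
  refine ⟨key, ?_, ?_, ?_⟩
  · intro ι h
    have hι : ι < lam := (hlt1 ι).mp h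
    simp only [if_pos hι, if_pos (hsucc ι hι)]
    exact hP.1 ι (hsucc ι hι)
  · intro ι κ hικ h
    have hκ : κ < lam := (hlt1 κ).mp h
    have hι : ι < lam := hικ.trans hκ
    simp only [if_pos hι, if_pos hκ, if_pos (hsucc ι hι), if_pos (hsucc κ hκ)]
    exact hP.2.1 ι κ hικ (hsucc κ hκ)
  · intro μ hμlim hμ ι hιμ
    rcases lt_or_eq_of_le ((hle μ).mp hμ) with hμ' | hμ'
    · have hι : ι < lam := hιμ.trans hμ'
      simp only [if_pos hι, if_pos hμ', if_pos (hsucc ι hι)]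
      exact hP.2.2 μ hμlim hμ' ι hιμ
    · subst hμ'
      have hι : ι < μ := hιμ
      simp only [if_pos hι, if_pos (hsucc ι hι), if_neg (lt_irrefl μ)]
      have heq : a (ι + 1) = φ (a ι) := (hP.1 ι (hsucc ι hι)).1
      rw [hd2, heq]
      exact ht ι hι
end

section
/- Let Γ be totally ordered, X principally complete, φ strictly contracting with fixed point z, and α = (a_ι)_{ι<λ} an asymptotic approximation to z. Then α is a pseudo-convergent family: for all ι < μ < ν < λ, d(a_ι, a_μ) = d(a_ι, a_{ι+1}) > d(a_μ, a_{μ+1}) = d(a_μ, a_ν). -/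
/-- An asymptotic approximation to the fixed point z is a pseudo-convergent
family: for all ι < μ < ν < λ,
d(a_ι, a_μ) = d(a_ι, a_{ι+1}) > d(a_μ, a_{μ+1}) = d(a_μ, a_ν). -/
theorem stmt_15 {X Γ : Type*} [LinearOrder Γ] [OrderBot Γ]
    (d : X → X → Γ)
    (hd1 : ∀ x y : X, d x y = ⊥ ↔ x = y)
    (hd2 : ∀ x y : X, d x y = d y x)
    (hd3 : ∀ x y z : X, d x z ≤ max (d x y) (d y z))
    (hns : ∀ γ : Γ, γ ≠ ⊥ → ∃ γ' : Γ, γ' ≠ ⊥ ∧ γ' < γ)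
    (hpc : ∀ C : Set (Set X),
      (∀ B ∈ C, ∃ x y : X, x ≠ y ∧ B = {w : X | d x w ≤ d x y}) →
      IsChain (· ⊆ ·) C → (⋂₀ C).Nonempty)
    (φ : X → X)
    (hφ : ∀ x x' : X, x ≠ x' → d (φ x) (φ x') < d x x')
    (z : X) (hz : φ z = z)
    (lam : Ordinal) (hlam : Order.IsSuccLimit lam) (a : Ordinal → X)
    (hsucc : ∀ ι : Ordinal, ι + 1 < lam → a (ι + 1) = φ (a ι) ∧ φ (a ι) ≠ a ι)
    (hdec : ∀ ι κ : Ordinal, ι < κ → κ + 1 < lam →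
      d (a κ) (a (κ + 1)) < d (a ι) (a (ι + 1)))
    (hlim : ∀ μ : Ordinal, Order.IsSuccLimit μ → μ < lam →
      ∀ ι : Ordinal, ι < μ → d (a μ) (a ι) ≤ d (a ι) (a (ι + 1)))
    (happrox : (⋂ ι ∈ Set.Iio lam, {w : X | d (a ι) w ≤ d (a ι) (φ (a ι))}) = {z}) :
    ∀ ι μ ν : Ordinal, ι < μ → μ < ν → ν < lam →
      d (a ι) (a μ) = d (a ι) (a (ι + 1)) ∧
      d (a μ) (a ν) = d (a μ) (a (μ + 1)) ∧
      d (a μ) (a (μ + 1)) < d (a ι) (a (ι + 1)) := by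

  have key : ∀ κ : Ordinal, κ < lam → ∀ ι, ι < κ →
      d (a ι) (a κ) = d (a ι) (a (ι + 1)) := by
    intro κ
    induction κ using Ordinal.induction with
    | h κ IH =>
      intro hκ ι hι
      rcases Ordinal.zero_or_succ_or_isSuccLimit κ with h0 | ⟨σ, rfl⟩ | hl
      · exact absurd (h0 ▸ hι) (zero_le (a := ι)).not_gt
      · rw [← Ordinal.add_one_eq_succ] at hκ hι ⊢
        have hle : ι ≤ σ := by
          rw [Ordinal.add_one_eq_succ] at hι; exact Order.lt_succ_iff.mp hι
        rcases hle.lt_or_eq with hισ | rfl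
        · have hσκ : σ < σ + 1 := lt_add_one σ
          have hIH := IH σ hσκ (hσκ.trans hκ) ι hισ
          have hlt : d (a σ) (a (σ + 1)) < d (a ι) (a (ι + 1)) := hdec ι σ hισ hκ
          refine le_antisymm ?_ ?_
          · calc d (a ι) (a (σ + 1)) ≤ max (d (a ι) (a σ)) (d (a σ) (a (σ + 1))) :=
                hd3 _ _ _
              _ ≤ d (a ι) (a (ι + 1)) := max_le (le_of_eq hIH) hlt.le
          · have h := hd3 (a ι) (a (σ + 1)) (a σ)
            rw [hIH, hd2 (a (σ + 1)) (a σ)] at h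
            exact (le_max_iff.mp h).resolve_right (not_le_of_gt hlt)
        · rfl
      · have hι1 : ι + 1 < κ := by
          rw [Ordinal.add_one_eq_succ]; exact hl.succ_lt hι
        have h1 := hlim κ hl hκ ι hι
        have h2 := hlim κ hl hκ (ι + 1) hι1
        have h3 : d (a (ι + 1)) (a (ι + 1 + 1)) < d (a ι) (a (ι + 1)) :=
          hdec ι (ι + 1) (lt_add_one ι) (by
            rw [Ordinal.add_one_eq_succ]
            exact (hl.succ_lt hι1).trans hκ)
        have h2' : d (a κ) (a (ι + 1)) < d (a ι) (a (ι + 1)) := lt_of_le_of_lt h2 h3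
        refine le_antisymm (by rw [hd2]; exact h1) ?_
        have h := hd3 (a ι) (a κ) (a (ι + 1))
        exact (le_max_iff.mp h).resolve_right (not_le_of_gt h2')
  intro ι μ ν hιμ hμν hν
  have hμ : μ < lam := hμν.trans hν
  have hμ1 : μ + 1 < lam := by
    rw [Ordinal.add_one_eq_succ]; exact hlam.succ_lt hμ
  exact ⟨key μ hμ ι hιμ, key ν hν μ hμν, hdec ι μ hιμ hμ1⟩
end

section
/- Let Γ be totally ordered, X principally complete, φ strictly contracting with fixed point z, and α = (a_ι)_{ι<λ} an asymptotic approximation to z. Then z is a pseudo-limit of α, and z is the only pseudo-limit of α. -/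
/-- The fixed point z is a pseudo-limit of any asymptotic approximation α to z,
and it is the only pseudo-limit of α. -/
theorem stmt_16 {X Γ : Type*} [LinearOrder Γ] [OrderBot Γ]
    (d : X → X → Γ)
    (hd1 : ∀ x y : X, d x y = ⊥ ↔ x = y)
    (hd2 : ∀ x y : X, d x y = d y x)
    (hd3 : ∀ x y z : X, d x z ≤ max (d x y) (d y z))
    (hns : ∀ γ : Γ, γ ≠ ⊥ → ∃ γ' : Γ, γ' ≠ ⊥ ∧ γ' < γ)
    (hpc : ∀ C : Set (Set X),
      (∀ B ∈ C, ∃ x y : X, x ≠ y ∧ B = {w : X | d x w ≤ d x y}) →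
      IsChain (· ⊆ ·) C → (⋂₀ C).Nonempty)
    (φ : X → X)
    (hφ : ∀ x x' : X, x ≠ x' → d (φ x) (φ x') < d x x')
    (z : X) (hz : φ z = z)
    (lam : Ordinal) (hlam : Order.IsSuccLimit lam) (a : Ordinal → X)
    (hsucc : ∀ ι : Ordinal, ι + 1 < lam → a (ι + 1) = φ (a ι) ∧ φ (a ι) ≠ a ι)
    (hdec : ∀ ι κ : Ordinal, ι < κ → κ + 1 < lam →
      d (a κ) (a (κ + 1)) < d (a ι) (a (ι + 1)))
    (hlim : ∀ μ : Ordinal, Order.IsSuccLimit μ → μ < lam →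
      ∀ ι : Ordinal, ι < μ → d (a μ) (a ι) ≤ d (a ι) (a (ι + 1)))
    (happrox : (⋂ ι ∈ Set.Iio lam, {w : X | d (a ι) w ≤ d (a ι) (φ (a ι))}) = {z}) :
    (∃ ι₁ < lam, ∀ ι : Ordinal, ι₁ ≤ ι → ι < lam →
      d z (a ι) ≤ d (a ι) (a (ι + 1))) ∧
    (∀ t : X, (∃ ι₁ < lam, ∀ ι : Ordinal, ι₁ ≤ ι → ι < lam →
      d t (a ι) ≤ d (a ι) (a (ι + 1))) → t = z) := by
  -- z is in the intersection
  have hzmem : ∀ ι < lam, d (a ι) z ≤ d (a ι) (φ (a ι)) := by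
    intro ι hι
    have : z ∈ (⋂ ι ∈ Set.Iio lam, {w : X | d (a ι) w ≤ d (a ι) (φ (a ι))}) := by
      rw [happrox]; rfl
    simpa using Set.mem_iInter₂.mp this ι hι
  have hφa : ∀ ι < lam, a (ι + 1) = φ (a ι) := by
    intro ι hι
    exact (hsucc ι (hlam.succ_lt hι)).1
  -- distance from a ι to a κ (ι < κ < lam) is ≤ d (a ι) (a (ι+1))
  have key : ∀ κ < lam, ∀ ι < κ, d (a ι) (a κ) ≤ d (a ι) (a (ι + 1)) := by
    intro κ
    induction κ using Ordinal.induction with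
    | h κ ih =>
      intro hκ ι hι
      rcases Ordinal.zero_or_succ_or_isSuccLimit κ with h0 | ⟨ν, hν⟩ | hL
      · subst h0; exact absurd hι (not_lt_zero (a := ι))
      · rw [← Ordinal.add_one_eq_succ] at hν
        subst hν
        have hι' : ι + 1 ≤ ν + 1 := by
          rw [Ordinal.add_one_eq_succ ι]
          exact Order.succ_le_of_lt hι
        rcases eq_or_lt_of_le hι' with he | hlt
        · rw [he]
        · have hν' : ι < ν := by
            rw [Ordinal.add_one_eq_succ, Ordinal.add_one_eq_succ] at hlt
            exact Order.succ_lt_succ_iff.mp hlt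
          calc d (a ι) (a (ν + 1)) ≤ max (d (a ι) (a ν)) (d (a ν) (a (ν + 1))) :=
                hd3 _ _ _
            _ ≤ d (a ι) (a (ι + 1)) := by
                apply max_le
                · have hνlt : ν < ν + 1 := by
                    rw [Ordinal.add_one_eq_succ]; exact Order.lt_succ ν
                  exact ih ν hνlt (lt_trans hνlt hκ) ι hν'
                · exact (hdec ι ν hν' hκ).le
      · have := hlim κ hL hκ ι hι
        rwa [hd2] at this
  constructor
  · refine ⟨0, hlam.pos, fun ι _ hι => ?_⟩
    have := hzmem ι hι
    rw [← hφa ι hι] at this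
    rwa [hd2]
  · rintro t ⟨ι₁, hι₁, ht⟩
    have htmem : t ∈ (⋂ ι ∈ Set.Iio lam, {w : X | d (a ι) w ≤ d (a ι) (φ (a ι))}) := by
      refine Set.mem_iInter₂.mpr fun ι hι => ?_
      have goal : d (a ι) t ≤ d (a ι) (a (ι + 1)) := by
        rcases le_or_gt ι₁ ι with hle | hlt
        · have := ht ι hle hι
          rwa [hd2] at this
        · calc d (a ι) t ≤ max (d (a ι) (a ι₁)) (d (a ι₁) t) := hd3 _ _ _
            _ ≤ d (a ι) (a (ι + 1)) := by
              apply max_le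
              · exact key ι₁ hι₁ ι hlt
              · have h1 : d (a ι₁) t ≤ d (a ι₁) (a (ι₁ + 1)) := by
                  have := ht ι₁ le_rfl hι₁; rwa [hd2] at this
                have h2 : d (a ι₁) (a (ι₁ + 1)) < d (a ι) (a (ι + 1)) :=
                  hdec ι ι₁ hlt (hlam.succ_lt hι₁)
                exact le_of_lt (lt_of_le_of_lt h1 h2)
      rw [← hφa ι hι]
      exact goal
    rw [happrox] at htmem
    exact htmem
end

section
/- Let Γ be totally ordered, X principally complete, φ strictly contracting with fixed point z, α ∈ P an asymptotic approximation to z, and α' ∈ P with α < α' (i.e., α' properly extends α). Then α' reaches z, that is, the element of α' at index λ (the length of α) equals z. -/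
/-- If α ∈ 𝒫 is an asymptotic approximation to z and α' ∈ 𝒫 properly extends α,
then α' reaches z: its element at index λ (the length of α) is z. -/
theorem stmt_17 {X Γ : Type*} [LinearOrder Γ] [OrderBot Γ]
    (d : X → X → Γ)
    (hd1 : ∀ x y : X, d x y = ⊥ ↔ x = y)
    (hd2 : ∀ x y : X, d x y = d y x)
    (hd3 : ∀ x y z : X, d x z ≤ max (d x y) (d y z))
    (hns : ∀ γ : Γ, γ ≠ ⊥ → ∃ γ' : Γ, γ' ≠ ⊥ ∧ γ' < γ)
    (hpc : ∀ C : Set (Set X),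
      (∀ B ∈ C, ∃ x y : X, x ≠ y ∧ B = {w : X | d x w ≤ d x y}) →
      IsChain (· ⊆ ·) C → (⋂₀ C).Nonempty)
    (φ : X → X)
    (hφ : ∀ x x' : X, x ≠ x' → d (φ x) (φ x') < d x x')
    (z : X) (hz : φ z = z)
    (lam : Ordinal) (a : Ordinal → X)
    (hP : MemP d φ lam a)
    (hlam : Order.IsSuccLimit lam)
    (happrox : (⋂ ι ∈ Set.Iio lam, {w : X | d (a ι) w ≤ d (a ι) (φ (a ι))}) = {z})
    (lam' : Ordinal) (a' : Ordinal → X)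
    (hP' : MemP d φ lam' a')
    (hext : lam < lam' ∧ ∀ ι : Ordinal, ι < lam → a' ι = a ι) :
    a' lam = z := by
  have hmem : a' lam ∈ (⋂ ι ∈ Set.Iio lam, {w : X | d (a ι) w ≤ d (a ι) (φ (a ι))}) := by
    simp only [Set.mem_iInter, Set.mem_Iio, Set.mem_setOf_eq]
    intro ι hι
    have hι1 : ι + 1 < lam := by
      have := hlam.succ_lt hι
      rwa [← Ordinal.add_one_eq_succ] at this
    have h1 : a (ι + 1) = φ (a ι) := (hP.1 ι hι1).1
    have h2 := hP'.2.2 lam hlam (hext.1) ι hι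
    rw [hext.2 ι hι, hext.2 (ι + 1) hι1, h1] at h2
    calc d (a ι) (a' lam) = d (a' lam) (a ι) := hd2 _ _
      _ ≤ d (a ι) (φ (a ι)) := h2
  rw [happrox] at hmem
  exact hmem
end

section
/- Let Γ be totally ordered, X principally complete, φ strictly contracting with fixed point z, and α an asymptotic approximation to z. Then Σ_α = {d(a_ι, φ(a_ι)) : ι < λ} is coinitial in Λ_φ = {d(x, φ(x)) : x ∈ X, x ≠ z}: for every x ≠ z there exists ι < λ with d(a_ι, a_{ι+1}) ≤ d(x, φ(x)). -/
/-- For an asymptotic approximation α to z, the set Σ_α = {d(a_ι, φ(a_ι))} is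
coinitial in Λ_φ = {d(x, φ(x)) : x ≠ z}: for every x ≠ z there is ι < λ with
d(a_ι, a_{ι+1}) ≤ d(x, φ(x)). -/
theorem stmt_18 {X Γ : Type*} [LinearOrder Γ] [OrderBot Γ]
    (d : X → X → Γ)
    (hd1 : ∀ x y : X, d x y = ⊥ ↔ x = y)
    (hd2 : ∀ x y : X, d x y = d y x)
    (hd3 : ∀ x y z : X, d x z ≤ max (d x y) (d y z))
    (hns : ∀ γ : Γ, γ ≠ ⊥ → ∃ γ' : Γ, γ' ≠ ⊥ ∧ γ' < γ)
    (hpc : ∀ C : Set (Set X),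
      (∀ B ∈ C, ∃ x y : X, x ≠ y ∧ B = {w : X | d x w ≤ d x y}) →
      IsChain (· ⊆ ·) C → (⋂₀ C).Nonempty)
    (φ : X → X)
    (hφ : ∀ x x' : X, x ≠ x' → d (φ x) (φ x') < d x x')
    (z : X) (hz : φ z = z)
    (lam : Ordinal) (hlam : Order.IsSuccLimit lam) (a : Ordinal → X)
    (hsucc : ∀ ι : Ordinal, ι + 1 < lam → a (ι + 1) = φ (a ι) ∧ φ (a ι) ≠ a ι)
    (hdec : ∀ ι κ : Ordinal, ι < κ → κ + 1 < lam →
      d (a κ) (a (κ + 1)) < d (a ι) (a (ι + 1)))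
    (hlim : ∀ μ : Ordinal, Order.IsSuccLimit μ → μ < lam →
      ∀ ι : Ordinal, ι < μ → d (a μ) (a ι) ≤ d (a ι) (a (ι + 1)))
    (happrox : (⋂ ι ∈ Set.Iio lam, {w : X | d (a ι) w ≤ d (a ι) (φ (a ι))}) = {z}) :
    ∀ x : X, x ≠ z → ∃ ι < lam, d (a ι) (a (ι + 1)) ≤ d x (φ x) := by
  -- key: for y ≠ z, d y z = d y (φ y)
  have key : ∀ y : X, y ≠ z → d y z = d y (φ y) := by
    intro y hy
    have h1 : d (φ y) z < d y z := by
      have := hφ y z hy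
      rwa [hz] at this
    have hle1 : d y z ≤ d y (φ y) := by
      have := hd3 y (φ y) z
      rcases max_cases (d y (φ y)) (d (φ y) z) with ⟨he, _⟩ | ⟨he, _⟩
      · rwa [he] at this
      · rw [he] at this; exact absurd (lt_of_le_of_lt this h1) (lt_irrefl _)
    have hle2 : d y (φ y) ≤ d y z := by
      have := hd3 y z (φ y)
      have h2 : d z (φ y) < d y z := by rw [hd2]; exact h1
      exact this.trans (max_le le_rfl h2.le)
    exact le_antisymm hle1 hle2
  intro x hx
  by_contra hcon
  push_neg at hcon
  have hxz : x ∈ ({z} : Set X) := by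
    rw [← happrox]
    simp only [Set.mem_iInter, Set.mem_setOf_eq, Set.mem_Iio]
    intro ι hι
    have hι1 : ι + 1 < lam := hlam.succ_lt hι
    obtain ⟨heq, hne⟩ := hsucc ι hι1
    have haz : a ι ≠ z := fun h => hne (by rw [h, hz])
    have hkey1 : d (a ι) z = d (a ι) (φ (a ι)) := key (a ι) haz
    have hxlt : d x (φ x) < d (a ι) (φ (a ι)) := by
      have := hcon ι hι
      rwa [heq] at this
    have hdzx : d z x < d (a ι) (φ (a ι)) := by
      rw [hd2, key x hx]; exact hxlt
    calc d (a ι) x ≤ max (d (a ι) z) (d z x) := hd3 _ _ _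
      _ ≤ d (a ι) (φ (a ι)) := max_le hkey1.le hdzx.le
  exact hx hxz
end

section
/- Let Γ be totally ordered with no smallest positive element, X a solid principally complete ultrametric space, φ strictly contracting with fixed point z, and α an asymptotic approximation to z. Then Λ_φ = {d(x,φ(x)) : x ≠ z} equals Γ\{0}, α is a Cauchy family, and z = lim α. -/
/-- In a solid principally complete space: Λ_φ = Γ\{0}, every asymptotic
approximation α to z is a Cauchy family, and z = lim α. -/
theorem stmt_19 {X Γ : Type*} [LinearOrder Γ] [OrderBot Γ]
    (d : X → X → Γ)
    (hd1 : ∀ x y : X, d x y = ⊥ ↔ x = y)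
    (hd2 : ∀ x y : X, d x y = d y x)
    (hd3 : ∀ x y z : X, d x z ≤ max (d x y) (d y z))
    (hns : ∀ γ : Γ, γ ≠ ⊥ → ∃ γ' : Γ, γ' ≠ ⊥ ∧ γ' < γ)
    (hsolid : ∀ (γ : Γ) (x : X), ∃ y : X, d x y = γ)
    (hpc : ∀ C : Set (Set X),
      (∀ B ∈ C, ∃ x y : X, x ≠ y ∧ B = {w : X | d x w ≤ d x y}) →
      IsChain (· ⊆ ·) C → (⋂₀ C).Nonempty)
    (φ : X → X)
    (hφ : ∀ x x' : X, x ≠ x' → d (φ x) (φ x') < d x x')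
    (z : X) (hz : φ z = z)
    (lam : Ordinal) (hlam : Order.IsSuccLimit lam) (a : Ordinal → X)
    (hsucc : ∀ ι : Ordinal, ι + 1 < lam → a (ι + 1) = φ (a ι) ∧ φ (a ι) ≠ a ι)
    (hdec : ∀ ι κ : Ordinal, ι < κ → κ + 1 < lam →
      d (a κ) (a (κ + 1)) < d (a ι) (a (ι + 1)))
    (hlim : ∀ μ : Ordinal, Order.IsSuccLimit μ → μ < lam →
      ∀ ι : Ordinal, ι < μ → d (a μ) (a ι) ≤ d (a ι) (a (ι + 1)))
    (happrox : (⋂ ι ∈ Set.Iio lam, {w : X | d (a ι) w ≤ d (a ι) (φ (a ι))}) = {z}) :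
    ({γ : Γ | ∃ x : X, x ≠ z ∧ d x (φ x) = γ} = {γ : Γ | γ ≠ ⊥}) ∧
    (∀ γ : Γ, γ ≠ ⊥ → ∃ ι₀ < lam, ∀ ι κ : Ordinal, ι₀ ≤ ι → ι < κ → κ < lam →
      d (a ι) (a κ) < γ) ∧
    (∀ γ : Γ, γ ≠ ⊥ → ∃ ι₁ < lam, ∀ ι : Ordinal, ι₁ ≤ ι → ι < lam →
      d z (a ι) < γ) := by

  -- z belongs to every ball
  have hzball : ∀ ι : Ordinal, ι < lam → d (a ι) z ≤ d (a ι) (φ (a ι)) := by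
    have : z ∈ (⋂ ι ∈ Set.Iio lam, {w : X | d (a ι) w ≤ d (a ι) (φ (a ι))}) := by
      rw [happrox]; rfl
    simpa using this
  -- small step distances
  have hsmall : ∀ γ : Γ, γ ≠ ⊥ → ∃ ι₀ : Ordinal, ι₀ < lam ∧
      d (a ι₀) (a (ι₀ + 1)) < γ := by
    intro γ hγ
    by_contra h
    push_neg at h
    obtain ⟨γ', hγ'0, hγ'γ⟩ := hns γ hγ
    obtain ⟨w, hw⟩ := hsolid γ' z
    have hwz : w ≠ z := by
      intro he; rw [he, (hd1 z z).mpr rfl] at hw; exact hγ'0 hw.symm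
    have hwmem : w ∈ (⋂ ι ∈ Set.Iio lam, {w : X | d (a ι) w ≤ d (a ι) (φ (a ι))}) := by
      simp only [Set.mem_iInter, Set.mem_setOf_eq, Set.mem_Iio]
      intro ι hι
      have hι1 : ι + 1 < lam := by
        exact hlam.succ_lt hι
      have hstep : a (ι + 1) = φ (a ι) := (hsucc ι hι1).1
      have hge : γ ≤ d (a ι) (φ (a ι)) := by
        have := h ι (lt_of_le_of_lt (le_of_lt (lt_add_one ι)) hι1)
        rwa [hstep] at this
      calc d (a ι) w ≤ max (d (a ι) z) (d z w) := hd3 _ _ _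
        _ ≤ d (a ι) (φ (a ι)) := by
            apply max_le (hzball ι hι)
            rw [hw]; exact le_of_lt (lt_of_lt_of_le hγ'γ hge)
    rw [happrox] at hwmem
    exact hwz hwmem
  -- key ultrametric lemma: distance bounded by first step
  have hkey : ∀ κ : Ordinal, ∀ ι : Ordinal, ι < κ → κ < lam →
      d (a ι) (a κ) ≤ d (a ι) (a (ι + 1)) := by
    intro κ
    induction κ using Ordinal.induction with
    | h κ ih =>
      intro ι hικ hκlam
      rcases Ordinal.zero_or_succ_or_isSuccLimit κ with h0 | ⟨μ, hμ⟩ | hκlim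
      · exact absurd h0 (by exact (pos_iff_ne_zero.mp (lt_of_le_of_lt (zero_le (a := ι)) hικ)))
      · subst hμ
        rw [← Ordinal.add_one_eq_succ] at *
        rcases eq_or_lt_of_le (Order.le_of_lt_add_one hικ) with he | hιμ
        · subst he; exact le_rfl
        · have hμlam : μ < lam := lt_trans (lt_add_one μ) hκlam
          calc d (a ι) (a (μ + 1)) ≤ max (d (a ι) (a μ)) (d (a μ) (a (μ + 1))) := hd3 _ _ _
            _ ≤ d (a ι) (a (ι + 1)) := by
                apply max_le (ih μ (lt_add_one μ) ι hιμ hμlam)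
                exact le_of_lt (hdec ι μ hιμ hκlam)
      · have := hlim κ hκlim hκlam ι hικ
        rw [hd2]; exact this
  have hsle : ∀ ι₀ ι : Ordinal, ι₀ ≤ ι → ι + 1 < lam →
      d (a ι) (a (ι + 1)) ≤ d (a ι₀) (a (ι₀ + 1)) := by
    intro ι₀ ι h hι1
    rcases eq_or_lt_of_le h with he | hlt
    · subst he; exact le_rfl
    · exact le_of_lt (hdec ι₀ ι hlt hι1)
  refine ⟨?_, ?_, ?_⟩
  · ext γ
    simp only [Set.mem_setOf_eq]
    constructor
    · rintro ⟨x, hx, rfl⟩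
      intro hb
      have hfx : φ x = x := (hd1 x (φ x)).mp hb |>.symm
      have := hφ x z hx
      rw [hfx, hz] at this
      exact absurd this (lt_irrefl _)
    · intro hγ
      obtain ⟨y, hy⟩ := hsolid γ z
      have hyz : y ≠ z := by
        intro he; rw [he, (hd1 z z).mpr rfl] at hy; exact hγ hy.symm
      refine ⟨y, hyz, ?_⟩
      have h1 : d (φ y) z < γ := by
        have := hφ y z hyz
        rw [hz] at this
        rw [← hy, hd2 z y]; exact this
      have hle : d y (φ y) ≤ γ := by
        calc d y (φ y) ≤ max (d y z) (d z (φ y)) := hd3 _ _ _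
          _ ≤ γ := max_le (by rw [hd2]; exact le_of_eq hy)
              (by rw [hd2]; exact le_of_lt h1)
      have hge : γ ≤ d y (φ y) := by
        by_contra hlt
        push_neg at hlt
        have : d y z ≤ max (d y (φ y)) (d (φ y) z) := hd3 _ _ _
        rw [hd2 y z, hy] at this
        have : γ < γ := lt_of_le_of_lt this (max_lt hlt h1)
        exact lt_irrefl _ this
      exact le_antisymm hle hge
  · intro γ hγ
    obtain ⟨ι₀, hι₀lam, hι₀⟩ := hsmall γ hγ
    refine ⟨ι₀, hι₀lam, ?_⟩
    intro ι κ hle hικ hκlam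
    have hι1 : ι + 1 < lam := by
      exact hlam.succ_lt (lt_trans hικ hκlam)
    calc d (a ι) (a κ) ≤ d (a ι) (a (ι + 1)) := hkey κ ι hικ hκlam
      _ ≤ d (a ι₀) (a (ι₀ + 1)) := hsle ι₀ ι hle hι1
      _ < γ := hι₀
  · intro γ hγ
    obtain ⟨ι₀, hι₀lam, hι₀⟩ := hsmall γ hγ
    refine ⟨ι₀, hι₀lam, ?_⟩
    intro ι hle hιlam
    have hι1 : ι + 1 < lam := by
      exact hlam.succ_lt hιlam
    have hstep : a (ι + 1) = φ (a ι) := (hsucc ι hι1).1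
    calc d z (a ι) = d (a ι) z := hd2 _ _
      _ ≤ d (a ι) (φ (a ι)) := hzball ι hιlam
      _ = d (a ι) (a (ι + 1)) := by rw [hstep]
      _ ≤ d (a ι₀) (a (ι₀ + 1)) := hsle ι₀ ι hle hι1
      _ < γ := hι₀
end
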